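/- arXiv:math/0408026 — 2 statements merged into one kernel-verified Lean document; each statement's English description precedes it below -/
import Mathlib

section
/- The sum of the three minima (f(r)+g(r)) + (g(s)+s) + (f(t)+g(t)) over r, s, t ∈ [1,∞) equals 10π/3 + 2·sqrt(3) + 2, which is greater than 15.936, where f(r) = sqrt(r²-1)+arcsin(1/r) and g(r) = 2π - 2·arcsin(r/2) for r ≤ 2, g(r) = π for r ≥ 2. -/
open Real Set

noncomputable def f (r : ℝ) : ℝ := Real.sqrt (r^2 - 1) + Real.arcsin (1/r)

noncomputable def g (r : ℝ) : ℝ :=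
  if r ≤ 2 then 2*Real.pi - 2*Real.arcsin (r/2) else Real.pi

noncomputable def m (r s θ : ℝ) : ℝ :=
  if θ ≤ Real.arccos (1/r) + Real.arccos (1/s) then
    Real.sqrt (r^2 + s^2 - 2*r*s*Real.cos θ)
  else f r + f s + (θ - Real.pi)

abbrev E3 := EuclideanSpace ℝ (Fin 3)

/-- A set `K` has thickness at least 1 (thickness = twice infimal circumradius over
triples of distinct points) iff no three distinct points of `K` lie on a common
sphere of radius less than `1/2`. -/
def ThickOne (K : Set E3) : Prop :=
  ∀ x ∈ K, ∀ y ∈ K, ∀ z ∈ K, x ≠ y → y ≠ z → x ≠ z →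
    ∀ (c : E3) (ρ : ℝ), dist x c = ρ → dist y c = ρ → dist z c = ρ → 1/2 ≤ ρ

lemma sqrt_inv_aux {r : ℝ} (hr : 1 ≤ r) :
    Real.sqrt (1 - (1/r)^2) = Real.sqrt (r^2 - 1) / r := by
  have h0 : (0:ℝ) < r := lt_of_lt_of_le one_pos hr
  rw [show 1 - (1/r)^2 = (r^2 - 1) * (1/r)^2 by field_simp,
    Real.sqrt_mul (by nlinarith), Real.sqrt_sq (by positivity)]
  ring

lemma sqrt_half_aux {r : ℝ} (h0 : 0 ≤ r) (h2 : r ≤ 2) :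
    Real.sqrt (1 - (r/2)^2) = Real.sqrt (4 - r^2) / 2 := by
  rw [show 1 - (r/2)^2 = (4 - r^2) * (1/2)^2 by ring,
    Real.sqrt_mul (by nlinarith), Real.sqrt_sq (by norm_num)]
  ring

lemma has_deriv_sqrt_part {r : ℝ} (h1 : 1 < r) :
    HasDerivAt (fun x : ℝ => Real.sqrt (x^2 - 1)) (Real.sqrt (r^2-1) / r + 1/(r * Real.sqrt (r^2-1)))
      r := by
  have hpos : (0:ℝ) < r^2 - 1 := by nlinarith
  have hinner : HasDerivAt (fun x : ℝ => x^2 - 1) (2*r) r := by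
    simpa using (hasDerivAt_pow 2 r).sub_const 1
  have := (Real.hasDerivAt_sqrt hpos.ne').comp r hinner
  refine this.congr_deriv ?_; symm
  have hs : (0:ℝ) < Real.sqrt (r^2-1) := Real.sqrt_pos.2 hpos
  have hsq : Real.sqrt (r^2-1) ^ 2 = r^2 - 1 := Real.sq_sqrt hpos.le
  have h0 : (0:ℝ) < r := lt_trans one_pos h1
  field_simp
  nlinarith [hsq, mul_pos h0 hs, mul_pos (mul_pos h0 h0) hs]

lemma has_deriv_arcsin_part {r : ℝ} (h1 : 1 < r) :
    HasDerivAt (fun x : ℝ => Real.arcsin (1/x)) (-(1/(r * Real.sqrt (r^2-1)))) r := by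
  have h0 : (0:ℝ) < r := lt_trans one_pos h1
  have hinner : HasDerivAt (fun x : ℝ => 1/x) (-(1/r^2)) r := by
    simpa using (hasDerivAt_inv h0.ne')
  have hne1 : (1/r : ℝ) ≠ 1 := by
    intro heq; rw [div_eq_one_iff_eq h0.ne'] at heq; linarith
  have hne1' : (1/r : ℝ) ≠ -1 := by
    have : (0:ℝ) < 1/r := by positivity
    intro heq; rw [heq] at this; linarith
  have := (Real.hasDerivAt_arcsin hne1' hne1).comp r hinner
  refine this.congr_deriv ?_; symm
  rw [sqrt_inv_aux h1.le]
  have hs : (0:ℝ) < Real.sqrt (r^2-1) := Real.sqrt_pos.2 (by nlinarith)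
  field_simp

lemma has_deriv_arccos_part {r : ℝ} (h1 : 0 < r) (h2 : r < 2) :
    HasDerivAt (fun x : ℝ => Real.arccos (x/2)) (-(1/Real.sqrt (4-r^2))) r := by
  have hinner : HasDerivAt (fun x : ℝ => x/2) (1/2) r := by
    simpa using (hasDerivAt_id r).div_const 2
  have hne1 : (r/2 : ℝ) ≠ 1 := by
    intro heq; rw [div_eq_one_iff_eq (by norm_num : (2:ℝ) ≠ 0)] at heq; linarith
  have hne1' : (r/2 : ℝ) ≠ -1 := by
    have : (0:ℝ) < r/2 := by positivity
    intro heq; rw [heq] at this; linarith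
  have := (Real.hasDerivAt_arccos hne1' hne1).comp r hinner
  refine this.congr_deriv ?_; symm
  rw [sqrt_half_aux h1.le h2.le]
  have hs : (0:ℝ) < Real.sqrt (4-r^2) := Real.sqrt_pos.2 (by nlinarith)
  field_simp

lemma phi_anti : StrictAntiOn
    (fun r => Real.sqrt (r^2-1) + Real.arcsin (1/r) + 2*Real.arccos (r/2)) (Icc 1 2) := by
  apply strictAntiOn_of_deriv_neg (convex_Icc 1 2)
  · apply ContinuousOn.add
    apply ContinuousOn.add
    · exact (Real.continuous_sqrt.comp (by continuity)).continuousOn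
    · exact Real.continuous_arcsin.comp_continuousOn
        (continuousOn_const.div continuousOn_id (fun x hx => by
          have := hx.1; intro h; simp [h] at this; linarith))
    · exact (continuous_const.mul (Real.continuous_arccos.comp (by continuity))).continuousOn
  · intro r hr
    rw [interior_Icc] at hr
    obtain ⟨h1, h2⟩ := hr
    have h0 : (0:ℝ) < r := lt_trans one_pos h1
    have hd : HasDerivAt
        (fun r => Real.sqrt (r^2-1) + Real.arcsin (1/r) + 2*Real.arccos (r/2))
        ((Real.sqrt (r^2-1) / r + 1/(r * Real.sqrt (r^2-1))) + (-(1/(r * Real.sqrt (r^2-1))))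
          + 2 * (-(1/Real.sqrt (4-r^2)))) r :=
      (((has_deriv_sqrt_part h1).add (has_deriv_arcsin_part h1)).add
        ((has_deriv_arccos_part h0 h2).const_mul 2))
    rw [hd.deriv]
    have ha : (0:ℝ) < Real.sqrt (r^2-1) := Real.sqrt_pos.2 (by nlinarith)
    have hb : (0:ℝ) < Real.sqrt (4-r^2) := Real.sqrt_pos.2 (by nlinarith)
    have ha2 : Real.sqrt (r^2-1) ^ 2 = r^2-1 := Real.sq_sqrt (by nlinarith)
    have hb2 : Real.sqrt (4-r^2) ^ 2 = 4-r^2 := Real.sq_sqrt (by nlinarith)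
    have key : Real.sqrt (r^2-1) * Real.sqrt (4-r^2) < 2*r := by
      have hsq : (Real.sqrt (r^2-1) * Real.sqrt (4-r^2))^2 < (2*r)^2 := by
        rw [mul_pow, ha2, hb2]; nlinarith
      exact lt_of_pow_lt_pow_left₀ 2 (by positivity) hsq
    have : Real.sqrt (r^2-1) / r < 2 / Real.sqrt (4-r^2) := by
      rw [div_lt_div_iff₀ h0 hb]; linarith
    have h2b : 2 * (-(1/Real.sqrt (4-r^2))) = -(2/Real.sqrt (4-r^2)) := by ring
    linarith

lemma chi_mono : MonotoneOn (fun r => Real.sqrt (r^2-1) + Real.arcsin (1/r)) (Ici 2) := by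
  apply StrictMonoOn.monotoneOn
  apply strictMonoOn_of_deriv_pos (convex_Ici 2)
  · apply ContinuousOn.add
    · exact (Real.continuous_sqrt.comp (by continuity)).continuousOn
    · exact Real.continuous_arcsin.comp_continuousOn
        (continuousOn_const.div continuousOn_id (fun x hx => by
          have : (2:ℝ) ≤ x := hx; intro h; simp [h] at this; linarith))
  · intro r hr
    rw [interior_Ici] at hr
    have h1 : (1:ℝ) < r := by linarith [mem_Ioi.1 hr]
    have h0 : (0:ℝ) < r := lt_trans one_pos h1
    have hd : HasDerivAt (fun r => Real.sqrt (r^2-1) + Real.arcsin (1/r))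
        ((Real.sqrt (r^2-1) / r + 1/(r * Real.sqrt (r^2-1))) + (-(1/(r * Real.sqrt (r^2-1))))) r :=
      (has_deriv_sqrt_part h1).add (has_deriv_arcsin_part h1)
    rw [hd.deriv]
    have ha : (0:ℝ) < Real.sqrt (r^2-1) := Real.sqrt_pos.2 (by nlinarith)
    have : (0:ℝ) < Real.sqrt (r^2-1) / r := by positivity
    linarith

lemma psi_anti : StrictAntiOn (fun s => 2*Real.arccos (s/2) + s) (Icc 1 2) := by
  apply strictAntiOn_of_deriv_neg (convex_Icc 1 2)
  · exact ((continuous_const.mul (Real.continuous_arccos.comp (by continuity))).add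
      continuous_id).continuousOn
  · intro r hr
    rw [interior_Icc] at hr
    obtain ⟨h1, h2⟩ := hr
    have h0 : (0:ℝ) < r := lt_trans one_pos h1
    have hd : HasDerivAt (fun s => 2*Real.arccos (s/2) + s)
        (2 * (-(1/Real.sqrt (4-r^2))) + 1) r :=
      ((has_deriv_arccos_part h0 h2).const_mul 2).add (hasDerivAt_id r)
    rw [hd.deriv]
    have hb : (0:ℝ) < Real.sqrt (4-r^2) := Real.sqrt_pos.2 (by nlinarith)
    have hblt : Real.sqrt (4-r^2) < 2 := by
      have hb2 : Real.sqrt (4-r^2) ^ 2 = 4-r^2 := Real.sq_sqrt (by nlinarith)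
      nlinarith
    have : (1:ℝ) < 2 / Real.sqrt (4-r^2) := by
      rw [lt_div_iff₀ hb]; linarith
    have h2b : 2 * (-(1/Real.sqrt (4-r^2))) = -(2/Real.sqrt (4-r^2)) := by ring
    linarith

lemma arcsin_half : Real.arcsin (1/2) = Real.pi/6 := by
  have := Real.arcsin_sin (x := Real.pi/6) (by linarith [Real.pi_pos]) (by linarith [Real.pi_pos])
  rwa [Real.sin_pi_div_six] at this

lemma f_two : f 2 = Real.sqrt 3 + Real.pi/6 := by
  unfold f
  norm_num [arcsin_half]

lemma g_two : g 2 = Real.pi := by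
  unfold g
  norm_num [Real.arcsin_one]
  ring

lemma g_rw {r : ℝ} (h : r ≤ 2) : g r = 2*Real.arccos (r/2) + Real.pi := by
  unfold g
  rw [if_pos h, Real.arccos]
  ring

lemma fg_ge {r : ℝ} (hr : 1 ≤ r) : 7*Real.pi/6 + Real.sqrt 3 ≤ f r + g r := by
  rcases le_or_gt r 2 with h | h
  · have := (phi_anti.antitoneOn) (mem_Icc.2 ⟨hr, h⟩) (mem_Icc.2 ⟨one_le_two, le_refl 2⟩) h
    simp only at this
    rw [g_rw h]
    unfold f
    have h2 : Real.arccos (2/2:ℝ) = 0 := by norm_num [Real.arccos_one]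
    rw [show ((2:ℝ)^2 - 1) = 3 by norm_num, arcsin_half, h2] at this
    norm_num at this ⊢
    linarith
  · have hg : g r = Real.pi := by unfold g; rw [if_neg (not_le.2 h)]
    have := chi_mono (mem_Ici.2 (le_refl 2)) (mem_Ici.2 h.le) h.le
    simp only at this
    rw [show ((2:ℝ)^2 - 1) = 3 by norm_num, arcsin_half] at this
    norm_num at this
    unfold f
    rw [hg, one_div]
    linarith

lemma gs_ge {s : ℝ} (hs : 1 ≤ s) : Real.pi + 2 ≤ g s + s := by
  rcases le_or_gt s 2 with h | h
  · have := (psi_anti.antitoneOn) (mem_Icc.2 ⟨hs, h⟩) (mem_Icc.2 ⟨one_le_two, le_refl 2⟩) h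
    simp only at this
    rw [g_rw h]
    have h2 : Real.arccos (2/2:ℝ) = 0 := by norm_num [Real.arccos_one]
    rw [h2] at this
    norm_num at this
    linarith
  · have hg : g s = Real.pi := by unfold g; rw [if_neg (not_le.2 h)]
    rw [hg]; linarith

/-- The sum `(f(r)+g(r)) + (g(s)+s) + (f(t)+g(t))` over `r,s,t ∈ [1,∞)` is minimized
at `r = s = t = 2` with value `10π/3 + 2√3 + 2 > 15.936`. -/
theorem stmt18 :
    (∀ r ∈ Set.Ici (1:ℝ), ∀ s ∈ Set.Ici (1:ℝ), ∀ t ∈ Set.Ici (1:ℝ),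
        10*Real.pi/3 + 2*Real.sqrt 3 + 2 ≤ (f r + g r) + (g s + s) + (f t + g t)) ∧
      (f 2 + g 2) + (g 2 + 2) + (f 2 + g 2) = 10*Real.pi/3 + 2*Real.sqrt 3 + 2 ∧
      (15.936 : ℝ) < 10*Real.pi/3 + 2*Real.sqrt 3 + 2 := by
  refine ⟨fun r hr s hs t ht => ?_, ?_, ?_⟩
  · have h1 := fg_ge (mem_Ici.1 hr)
    have h2 := gs_ge (mem_Ici.1 hs)
    have h3 := fg_ge (mem_Ici.1 ht)
    linarith
  · rw [f_two, g_two]; ring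
  · have hp : Real.pi > 3.141592 := Real.pi_gt_d6
    have hs : Real.sqrt 3 > 1.732 := by
      rw [show (1.732:ℝ) = Real.sqrt (1.732^2) from (Real.sqrt_sq (by norm_num)).symm]
      exact Real.sqrt_lt_sqrt (by positivity) (by norm_num)
    have hs2 : Real.sqrt 3 > 1.7320508 := by
      rw [show (1.7320508:ℝ) = Real.sqrt (1.7320508^2) from (Real.sqrt_sq (by norm_num)).symm]
      exact Real.sqrt_lt_sqrt (by positivity) (by norm_num)
    nlinarith
end

section
/- Let K be a closed curve of unit thickness and p, a, b ∈ K with p not on the oriented subarc of K from a to b. Then the chordal distance satisfies: the length of the subarc from a to b is at least the spherical distance 2·arcsin(|Πa - Πb|/2) where Π is radial projection to the unit sphere around p, and moreover |Πa - Πb| ≤ |a - b| whenever |a-p| ≥ 1 and |b-p| ≥ 1. -/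
open Real Set

section Aux

open InnerProductGeometry

local notation "⟪" x ", " y "⟫" => @inner ℝ _ _ x y

/-- Spherical distance between unit vectors equals the angle. -/
lemma two_arcsin_eq {x y : E3} (hx : ‖x‖ = 1) (hy : ‖y‖ = 1) :
    2 * Real.arcsin (‖x - y‖ / 2) = angle x y := by
  have hθ0 : 0 ≤ angle x y := angle_nonneg x y
  have hθπ : angle x y ≤ π := angle_le_pi x y
  have hπ : 0 < π := Real.pi_pos
  have hcos : Real.cos (angle x y) = ⟪x, y⟫ := by
    rw [cos_angle, hx, hy, mul_one, div_one]
  have hn : ‖x - y‖ ^ 2 = 2 - 2 * Real.cos (angle x y) := by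
    rw [norm_sub_sq_real, hx, hy, hcos]; ring
  have h2 : ‖x - y‖ / 2 = Real.sin (angle x y / 2) := by
    rw [Real.sin_half_eq_sqrt (by linarith) (by linarith)]
    rw [show (1 - Real.cos (angle x y)) / 2 = (‖x - y‖ / 2) ^ 2 by
      rw [div_pow]; linarith]
    exact (Real.sqrt_sq (by positivity)).symm
  rw [h2, Real.arcsin_sin (by linarith) (by linarith)]
  ring

/-- Triangle inequality for angles between unit vectors. -/
lemma angle_triangle_unit {x y z : E3} (hx : ‖x‖ = 1) (hy : ‖y‖ = 1) (hz : ‖z‖ = 1) :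
    angle x z ≤ angle x y + angle y z := by
  rcases le_or_gt π (angle x y + angle y z) with h | h
  · exact (angle_le_pi x z).trans h
  set c1 : ℝ := ⟪x, y⟫ with hc1
  set c2 : ℝ := ⟪y, z⟫ with hc2
  have hcos1 : Real.cos (angle x y) = c1 := by rw [cos_angle, hx, hy, mul_one, div_one]
  have hcos2 : Real.cos (angle y z) = c2 := by rw [cos_angle, hy, hz, mul_one, div_one]
  have hxx : ⟪x, x⟫ = (1:ℝ) := by rw [real_inner_self_eq_norm_sq, hx]; norm_num
  have hyy : ⟪y, y⟫ = (1:ℝ) := by rw [real_inner_self_eq_norm_sq, hy]; norm_num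
  have hzz : ⟪z, z⟫ = (1:ℝ) := by rw [real_inner_self_eq_norm_sq, hz]; norm_num
  have hs1 : Real.sin (angle x y) = ‖x - c1 • y‖ := by
    have h1 := sin_angle_mul_norm_mul_norm x y
    rw [hx, hy, hxx, hyy, one_mul, mul_one, ← hc1] at h1
    have h2 : ‖x - c1 • y‖ ^ 2 = 1 - c1 * c1 := by
      rw [norm_sub_sq_real, norm_smul, real_inner_smul_right, hx, hy, ← hc1]
      have : |c1| ^ 2 = c1 * c1 := by rw [sq_abs]; ring
      rw [Real.norm_eq_abs]; nlinarith [sq_abs c1]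
    rw [show (1:ℝ) - c1 * c1 = ‖x - c1 • y‖ ^ 2 from h2.symm,
      Real.sqrt_sq (norm_nonneg _)] at h1
    exact h1
  have hs2 : Real.sin (angle y z) = ‖z - c2 • y‖ := by
    have h1 := sin_angle_mul_norm_mul_norm z y
    rw [hz, hy, hzz, hyy, one_mul, mul_one] at h1
    have h2 : ‖z - c2 • y‖ ^ 2 = 1 - ⟪z, y⟫ * ⟪z, y⟫ := by
      rw [norm_sub_sq_real, norm_smul, real_inner_smul_right, hz, hy]
      have hswap : ⟪z, y⟫ = c2 := real_inner_comm y z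
      rw [Real.norm_eq_abs, hswap]; nlinarith [sq_abs c2]
    rw [show (1:ℝ) - ⟪z, y⟫ * ⟪z, y⟫ = ‖z - c2 • y‖ ^ 2 from h2.symm,
      Real.sqrt_sq (norm_nonneg _)] at h1
    rw [angle_comm]
    exact h1
  have hinner : ⟪x - c1 • y, z - c2 • y⟫ = ⟪x, z⟫ - c1 * c2 := by
    rw [inner_sub_left, inner_sub_right, inner_sub_right, real_inner_smul_left,
      real_inner_smul_left, real_inner_smul_right, real_inner_smul_right, hyy]
    simp only [← hc1, ← hc2, real_inner_comm x y]; ring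
  have hCS : |⟪x - c1 • y, z - c2 • y⟫| ≤ ‖x - c1 • y‖ * ‖z - c2 • y‖ :=
    abs_real_inner_le_norm _ _
  have hcosxz : Real.cos (angle x z) = ⟪x, z⟫ := by rw [cos_angle, hx, hz, mul_one, div_one]
  have hkey : Real.cos (angle x y + angle y z) ≤ Real.cos (angle x z) := by
    rw [Real.cos_add, hcos1, hcos2, hs1, hs2, hcosxz]
    have := neg_abs_le ⟪x - c1 • y, z - c2 • y⟫
    rw [hinner] at this hCS
    have habs := abs_le.mp hCS
    linarith [habs.1]
  by_contra hlt
  push_neg at hlt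
  have h1 : angle x y + angle y z ∈ Set.Icc 0 π :=
    ⟨add_nonneg (angle_nonneg x y) (angle_nonneg y z), h.le⟩
  have h2 : angle x z ∈ Set.Icc 0 π := ⟨angle_nonneg x z, angle_le_pi x z⟩
  have := Real.strictAntiOn_cos h1 h2 hlt
  linarith

/-- Triangle inequality for angles. -/
lemma angle_triangle (x y z : E3) : angle x z ≤ angle x y + angle y z := by
  by_cases hy : y = 0
  · subst hy
    rw [angle_zero_right, angle_zero_left]
    linarith [angle_le_pi x z]
  by_cases hx : x = 0
  · subst hx
    rw [angle_zero_left, angle_zero_left]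
    linarith [angle_nonneg y z]
  by_cases hz : z = 0
  · subst hz
    rw [angle_zero_right, angle_zero_right]
    linarith [angle_nonneg x y]
  have hxn : (0:ℝ) < ‖x‖ := norm_pos_iff.mpr hx
  have hyn : (0:ℝ) < ‖y‖ := norm_pos_iff.mpr hy
  have hzn : (0:ℝ) < ‖z‖ := norm_pos_iff.mpr hz
  have hux : ‖‖x‖⁻¹ • x‖ = 1 := by
    rw [norm_smul, Real.norm_eq_abs, abs_of_pos (inv_pos.2 hxn), inv_mul_cancel₀ hxn.ne']
  have huy : ‖‖y‖⁻¹ • y‖ = 1 := by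
    rw [norm_smul, Real.norm_eq_abs, abs_of_pos (inv_pos.2 hyn), inv_mul_cancel₀ hyn.ne']
  have huz : ‖‖z‖⁻¹ • z‖ = 1 := by
    rw [norm_smul, Real.norm_eq_abs, abs_of_pos (inv_pos.2 hzn), inv_mul_cancel₀ hzn.ne']
  have h := angle_triangle_unit hux huy huz
  have e1 : angle (‖x‖⁻¹ • x) (‖z‖⁻¹ • z) = angle x z := by
    rw [angle_smul_left_of_pos _ _ (inv_pos.2 hxn), angle_smul_right_of_pos _ _ (inv_pos.2 hzn)]
  have e2 : angle (‖x‖⁻¹ • x) (‖y‖⁻¹ • y) = angle x y := by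
    rw [angle_smul_left_of_pos _ _ (inv_pos.2 hxn), angle_smul_right_of_pos _ _ (inv_pos.2 hyn)]
  have e3 : angle (‖y‖⁻¹ • y) (‖z‖⁻¹ • z) = angle y z := by
    rw [angle_smul_left_of_pos _ _ (inv_pos.2 hyn), angle_smul_right_of_pos _ _ (inv_pos.2 hzn)]
  rwa [e1, e2, e3] at h

/-- Key consequence of thickness: `dist x y ≥ sin (angle at p)`. -/
lemma sin_angle_le_dist {K : Set E3} (hK : ThickOne K) {p x y : E3}
    (hpK : p ∈ K) (hx : x ∈ K) (hy : y ∈ K) (hxp : x ≠ p) (hyp : y ≠ p) :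
    Real.sin (angle (x - p) (y - p)) ≤ dist x y := by
  set u := x - p with hu
  set v := y - p with hv
  have hu0 : u ≠ 0 := sub_ne_zero.2 hxp
  have hv0 : v ≠ 0 := sub_ne_zero.2 hyp
  have hun : (0:ℝ) < ‖u‖ := norm_pos_iff.mpr hu0
  have hvn : (0:ℝ) < ‖v‖ := norm_pos_iff.mpr hv0
  set A : ℝ := ⟪u, u⟫ with hA
  set B : ℝ := ⟪v, v⟫ with hB
  set e : ℝ := ⟪u, v⟫ with he
  have hAn : A = ‖u‖ ^ 2 := real_inner_self_eq_norm_sq u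
  have hBn : B = ‖v‖ ^ 2 := real_inner_self_eq_norm_sq v
  have hdxy : dist x y = ‖u - v‖ := by
    simp only [hu, hv, sub_sub_sub_cancel_right, dist_eq_norm]
  have hduv : ‖u - v‖ ^ 2 = A + B - 2 * e := by
    rw [norm_sub_sq_real, ← hAn, ← hBn, ← he]; ring
  -- key algebraic inequality from thickness
  have key : A * B - e * e ≤ A * B * ‖u - v‖ ^ 2 := by
    rcases le_or_gt (A * B - e * e) 0 with hG | hG
    · have hA0 : (0:ℝ) ≤ A := by rw [hAn]; positivity
      have hB0 : (0:ℝ) ≤ B := by rw [hBn]; positivity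
      exact hG.trans (mul_nonneg (mul_nonneg hA0 hB0) (sq_nonneg _))
    · have hxy : x ≠ y := by
        intro hcon
        have huv : u = v := by rw [hu, hv, hcon]
        have hAe : A = e := by rw [hA, he]; rw [huv]
        have hBe : B = e := by rw [hB, he]; rw [huv]
        nlinarith [hG]
      set G : ℝ := A * B - e * e with hGdef
      set α : ℝ := B * (A - e) / (2 * G) with hα
      set β : ℝ := A * (B - e) / (2 * G) with hβ
      set w : E3 := α • u + β • v with hw
      have hwu : ⟪u, w⟫ = A / 2 := by
        rw [hw, inner_add_right, real_inner_smul_right, real_inner_smul_right, ← hA, ← he,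
          hα, hβ]
        field_simp
        ring
      have hwv : ⟪v, w⟫ = B / 2 := by
        rw [hw, inner_add_right, real_inner_smul_right, real_inner_smul_right, ← hB]
        have : ⟪v, u⟫ = e := real_inner_comm u v
        rw [this, hα, hβ]
        field_simp
        ring
      have hww : ⟪w, w⟫ = A * B * (A + B - 2 * e) / (4 * G) := by
        have h1 : ⟪w, w⟫ = α * ⟪u, w⟫ + β * ⟪v, w⟫ := by
          conv_lhs => rw [hw]
          rw [inner_add_left, real_inner_smul_left, real_inner_smul_left]
        rw [h1, hwu, hwv, hα, hβ]
        field_simp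
        ring
      set c : E3 := p + w with hc
      have hdist : ∀ q : E3, dist q c = ‖(q - p) - w‖ := by
        intro q
        rw [dist_eq_norm, hc]
        congr 1
        abel
      have hnormeq : ∀ q : E3, ⟪q - p, w⟫ = ‖q - p‖ ^ 2 / 2 → dist q c = ‖w‖ := by
        intro q hq
        rw [hdist q]
        have h2 : ‖q - p - w‖ ^ 2 = ‖w‖ ^ 2 := by
          rw [norm_sub_sq_real, hq]; ring
        have := congrArg Real.sqrt h2
        rwa [Real.sqrt_sq (norm_nonneg _), Real.sqrt_sq (norm_nonneg _)] at this
      have hdx : dist x c = ‖w‖ := hnormeq x (by rw [← hu, hwu, hAn])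
      have hdy : dist y c = ‖w‖ := hnormeq y (by rw [← hv, hwv, hBn])
      have hdp : dist p c = ‖w‖ := by
        rw [hdist p]
        simp
      have hhalf : (1:ℝ)/2 ≤ ‖w‖ := hK x hx y hy p hpK hxy hyp hxp c ‖w‖ hdx hdy hdp
      have hq : (1:ℝ)/4 ≤ ⟪w, w⟫ := by
        rw [real_inner_self_eq_norm_sq]
        nlinarith [norm_nonneg w]
      rw [hww] at hq
      have h4G : (0:ℝ) < 4 * G := by linarith
      have := (le_div_iff₀ h4G).mp hq
      rw [hduv]
      calc A * B - e * e = G := rfl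
        _ ≤ A * B * (A + B - 2 * e) := by linarith
  -- conclude
  have h1 := sin_angle_mul_norm_mul_norm u v
  rw [← hA, ← hB, ← he] at h1
  have h2 : Real.sqrt (A * B - e * e) ≤ ‖u - v‖ * (‖u‖ * ‖v‖) := by
    have h3 : A * B - e * e ≤ (‖u - v‖ * (‖u‖ * ‖v‖)) ^ 2 := by
      calc A * B - e * e ≤ A * B * ‖u - v‖ ^ 2 := key
        _ = (‖u - v‖ * (‖u‖ * ‖v‖)) ^ 2 := by rw [hAn, hBn]; ring
    calc Real.sqrt (A * B - e * e) ≤ Real.sqrt ((‖u - v‖ * (‖u‖ * ‖v‖)) ^ 2) :=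
          Real.sqrt_le_sqrt h3
      _ = ‖u - v‖ * (‖u‖ * ‖v‖) := Real.sqrt_sq (by positivity)
  rw [hdxy]
  have hpos : (0:ℝ) < ‖u‖ * ‖v‖ := by positivity
  have := h1.trans_le h2
  exact le_of_mul_le_mul_right this hpos

/-- Lower bound for sin near 0. -/
lemma sin_lb {c x : ℝ} (hc0 : 0 < c) (hc1 : c ≤ 1) (hx0 : 0 ≤ x) (hxc : x ≤ c) :
    (1 - c) * x ≤ Real.sin x := by
  rcases eq_or_lt_of_le hx0 with h | h
  · simp [← h]
  · have hcube := Real.sin_gt_sub_cube h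
    nlinarith [mul_nonneg hx0 hx0, sq_nonneg x, mul_le_mul_of_nonneg_left hxc hx0]

end Aux

open InnerProductGeometry RealInnerProductSpace

set_option maxHeartbeats 1000000

/-- For a closed curve of unit thickness with `p` not on the subarc from `a` to `b`:
the length of that subarc is at least the spherical distance `2 arcsin(|Πa - Πb|/2)`,
where `Π` is radial projection to the unit sphere around `p`; moreover
`|Πa - Πb| ≤ |a - b|` whenever `|a-p| ≥ 1` and `|b-p| ≥ 1`. -/
theorem stmt19 (γ : ℝ → E3) (L : ℝ) (hL : 0 < L) (hcont : Continuous γ)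
    (hper : Function.Periodic γ L) (hinj : Set.InjOn γ (Set.Ico 0 L))
    (hthick : ThickOne (Set.range γ))
    (p a b : E3) (s t : ℝ) (hst : s ≤ t)
    (hγs : γ s = a) (hγt : γ t = b)
    (hp : p ∈ Set.range γ) (hpa : p ≠ a) (hpb : p ≠ b)
    (hpnot : p ∉ γ '' Set.Icc s t) :
    ENNReal.ofReal (2 * Real.arcsin
        (dist (p + (dist a p)⁻¹ • (a - p)) (p + (dist b p)⁻¹ • (b - p)) / 2))
      ≤ eVariationOn γ (Set.Icc s t) ∧
    (1 ≤ dist a p → 1 ≤ dist b p →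
      dist (p + (dist a p)⁻¹ • (a - p)) (p + (dist b p)⁻¹ • (b - p)) ≤ dist a b) := by
  have hnz : ∀ u ∈ Set.Icc s t, γ u ≠ p := fun u hu h => hpnot ⟨u, hu, h⟩
  have hap : a ≠ p := fun h => hpa h.symm
  have hbp : b ≠ p := fun h => hpb h.symm
  have hrapos : (0:ℝ) < ‖a - p‖ := norm_pos_iff.mpr (sub_ne_zero.2 hap)
  have hrbpos : (0:ℝ) < ‖b - p‖ := norm_pos_iff.mpr (sub_ne_zero.2 hbp)
  have hra : dist a p = ‖a - p‖ := dist_eq_norm a p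
  have hrb : dist b p = ‖b - p‖ := dist_eq_norm b p
  have hchord : dist (p + (dist a p)⁻¹ • (a - p)) (p + (dist b p)⁻¹ • (b - p))
      = ‖(‖a - p‖⁻¹ • (a - p)) - (‖b - p‖⁻¹ • (b - p))‖ := by
    rw [hra, hrb, dist_add_left, dist_eq_norm]
  have hunita : ‖(‖a - p‖⁻¹ • (a - p))‖ = 1 := by
    rw [norm_smul, Real.norm_eq_abs, abs_of_pos (inv_pos.2 hrapos), inv_mul_cancel₀ hrapos.ne']
  have hunitb : ‖(‖b - p‖⁻¹ • (b - p))‖ = 1 := by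
    rw [norm_smul, Real.norm_eq_abs, abs_of_pos (inv_pos.2 hrbpos), inv_mul_cancel₀ hrbpos.ne']
  have hangle : 2 * Real.arcsin
      (dist (p + (dist a p)⁻¹ • (a - p)) (p + (dist b p)⁻¹ • (b - p)) / 2)
      = angle (a - p) (b - p) := by
    rw [hchord, two_arcsin_eq hunita hunitb,
      angle_smul_left_of_pos _ _ (inv_pos.2 hrapos),
      angle_smul_right_of_pos _ _ (inv_pos.2 hrbpos)]
  constructor
  · -- arc length lower bound
    rw [hangle]
    set θab := angle (a - p) (b - p) with hθab
    have key : ∀ ε : ℝ, 0 < ε → ε < 1 →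
        ENNReal.ofReal ((1 - ε) * θab) ≤ eVariationOn γ (Set.Icc s t) := by
      intro ε hε hε1
      set F : ℝ × ℝ → ℝ := fun q => angle (γ q.1 - p) (γ q.2 - p) with hF
      have hFeq : ∀ x y : ℝ, F (x, y) = angle (γ x - p) (γ y - p) := fun _ _ => rfl
      have hKc : IsCompact (Set.Icc s t ×ˢ Set.Icc s t) := isCompact_Icc.prod isCompact_Icc
      have hFc : ContinuousOn F (Set.Icc s t ×ˢ Set.Icc s t) := by
        intro q hq
        rw [Set.mem_prod] at hq
        have h1 : ContinuousAt (fun w : E3 × E3 => angle w.1 w.2)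
            (γ q.1 - p, γ q.2 - p) :=
          continuousAt_angle (sub_ne_zero.2 (hnz _ hq.1)) (sub_ne_zero.2 (hnz _ hq.2))
        have h2 : ContinuousAt (fun q : ℝ × ℝ => ((γ q.1 - p, γ q.2 - p) : E3 × E3)) q :=
          (((hcont.comp continuous_fst).sub continuous_const).prodMk
            ((hcont.comp continuous_snd).sub continuous_const)).continuousAt
        exact (ContinuousAt.comp (f := fun q : ℝ × ℝ => ((γ q.1 - p, γ q.2 - p) : E3 × E3))
          h1 h2).continuousWithinAt
      have hUC := hKc.uniformContinuousOn_of_continuous hFc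
      rw [Metric.uniformContinuousOn_iff] at hUC
      obtain ⟨δ, hδ0, hδ⟩ := hUC ε hε
      obtain ⟨n, hn⟩ := exists_nat_gt (max 1 ((t - s)/δ))
      have h1n : (1:ℝ) < n := lt_of_le_of_lt (le_max_left _ _) hn
      have hnR : (0:ℝ) < (n:ℝ) := by linarith
      have hne : (n:ℝ) ≠ 0 := hnR.ne'
      have hstep : (t - s)/n < δ := by
        rw [div_lt_iff₀ hnR]
        have h2 : (t - s)/δ < n := lt_of_le_of_lt (le_max_right _ _) hn
        calc t - s = ((t - s)/δ) * δ := (div_mul_cancel₀ _ hδ0.ne').symm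
          _ < n * δ := mul_lt_mul_of_pos_right h2 hδ0
          _ = δ * n := mul_comm _ _
      have hstep0 : 0 ≤ (t - s)/n := div_nonneg (by linarith) hnR.le
      set u : ℕ → ℝ := fun i => s + (min i n : ℕ) * ((t - s)/n) with hudef
      have hnn : (n:ℝ) * ((t - s)/n) = t - s := by field_simp
      have humem : ∀ i, u i ∈ Set.Icc s t := by
        intro i
        constructor
        · have h0 : (0:ℝ) ≤ (min i n : ℕ) * ((t - s)/n) :=
            mul_nonneg (Nat.cast_nonneg _) hstep0
          simp only [hudef]; linarith
        · have hk : ((min i n : ℕ) : ℝ) ≤ (n:ℝ) := by exact_mod_cast min_le_right i n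
          have h0 : ((min i n : ℕ):ℝ) * ((t - s)/n) ≤ (n:ℝ) * ((t - s)/n) :=
            mul_le_mul_of_nonneg_right hk hstep0
          simp only [hudef]; linarith
      have humono : Monotone u := by
        intro i j hij
        have hk : ((min i n : ℕ) : ℝ) ≤ ((min j n : ℕ) : ℝ) := by
          exact_mod_cast min_le_min hij (le_refl n)
        simp only [hudef]
        exact add_le_add_right (mul_le_mul_of_nonneg_right hk hstep0) s
      have hu0 : u 0 = s := by simp [hudef]
      have hun : u n = t := by
        simp only [hudef, min_self]
        rw [hnn]; ring
      have hwnz : ∀ i, γ (u i) - p ≠ 0 := fun i => sub_ne_zero.2 (hnz _ (humem i))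
      have hsmall : ∀ i, i < n → F (u i, u (i+1)) ≤ ε := by
        intro i hi
        have hmin1 : min (i+1) n = i+1 := min_eq_left (Nat.succ_le_of_lt hi)
        have hmin0 : min i n = i := min_eq_left hi.le
        have hdiff : u (i+1) - u i = (t - s)/n := by
          simp only [hudef, hmin1, hmin0]; push_cast; ring
        have hdlt : dist ((u i, u (i+1)) : ℝ × ℝ) ((u i, u i) : ℝ × ℝ) < δ := by
          rw [Prod.dist_eq]
          have h0 : dist (u i) (u i) = 0 := dist_self _
          have h1 : dist (u (i+1)) (u i) = (t - s)/n := by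
            rw [Real.dist_eq, hdiff, abs_of_nonneg hstep0]
          rw [h0, h1, max_eq_right hstep0]
          exact hstep
        have hδ' := hδ ((u i, u (i+1)) : ℝ × ℝ)
          (Set.mem_prod.mpr ⟨humem i, humem (i+1)⟩) ((u i, u i) : ℝ × ℝ)
          (Set.mem_prod.mpr ⟨humem i, humem i⟩) hdlt
        have hFd : F (u i, u i) = 0 := angle_self (hwnz i)
        rw [Real.dist_eq, hFd, sub_zero] at hδ'
        exact (le_abs_self _).trans hδ'.le
      have chain : ∀ k : ℕ, angle (γ (u 0) - p) (γ (u k) - p)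
          ≤ ∑ i ∈ Finset.range k, F (u i, u (i+1)) := by
        intro k
        induction k with
        | zero =>
          simp [angle_self (hwnz 0)]
        | succ k ih =>
          rw [Finset.sum_range_succ]
          calc angle (γ (u 0) - p) (γ (u (k+1)) - p)
              ≤ angle (γ (u 0) - p) (γ (u k) - p)
                + angle (γ (u k) - p) (γ (u (k+1)) - p) := angle_triangle _ _ _
            _ ≤ _ := add_le_add_left ih _
      have hseg : ∀ i ∈ Finset.range n,
          (1 - ε) * F (u i, u (i+1)) ≤ dist (γ (u (i+1))) (γ (u i)) := by
        intro i hi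
        rw [Finset.mem_range] at hi
        have h1 := sin_lb hε hε1.le (angle_nonneg (γ (u i) - p) (γ (u (i+1)) - p))
          (hsmall i hi)
        have h2 := sin_angle_le_dist hthick hp (Set.mem_range_self (u i))
          (Set.mem_range_self (u (i+1))) (hnz _ (humem i)) (hnz _ (humem (i+1)))
        rw [hFeq]
        exact h1.trans (h2.trans_eq (dist_comm _ _))
      have hsum : (1 - ε) * θab ≤ ∑ i ∈ Finset.range n, dist (γ (u (i+1))) (γ (u i)) := by
        have h1 : θab ≤ ∑ i ∈ Finset.range n, F (u i, u (i+1)) := by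
          have h2 := chain n
          rw [hu0, hun, hγs, hγt] at h2
          exact h2
        calc (1 - ε) * θab ≤ (1 - ε) * ∑ i ∈ Finset.range n, F (u i, u (i+1)) :=
              mul_le_mul_of_nonneg_left h1 (by linarith)
          _ = ∑ i ∈ Finset.range n, (1 - ε) * F (u i, u (i+1)) := Finset.mul_sum _ _ _
          _ ≤ _ := Finset.sum_le_sum hseg
      calc ENNReal.ofReal ((1 - ε) * θab)
          ≤ ENNReal.ofReal (∑ i ∈ Finset.range n, dist (γ (u (i+1))) (γ (u i))) :=
            ENNReal.ofReal_le_ofReal hsum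
        _ = ∑ i ∈ Finset.range n, ENNReal.ofReal (dist (γ (u (i+1))) (γ (u i))) :=
            ENNReal.ofReal_sum_of_nonneg (fun i _ => dist_nonneg)
        _ = ∑ i ∈ Finset.range n, edist (γ (u (i+1))) (γ (u i)) :=
            Finset.sum_congr rfl fun i _ => (edist_dist _ _).symm
        _ ≤ eVariationOn γ (Set.Icc s t) := eVariationOn.sum_le (f := γ) (n := n) humono humem
    have hlim : Filter.Tendsto (fun ε : ℝ => ENNReal.ofReal ((1 - ε) * θab))
        (nhdsWithin 0 (Set.Ioi 0)) (nhds (ENNReal.ofReal θab)) := by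
      have hc : Continuous fun ε : ℝ => (1 - ε) * θab := by continuity
      have h0 : (fun ε : ℝ => (1 - ε) * θab) 0 = θab := by norm_num
      have h1 : Filter.Tendsto (fun ε : ℝ => (1 - ε) * θab)
          (nhdsWithin 0 (Set.Ioi 0)) (nhds θab) := by
        have h2 := (hc.tendsto 0).mono_left
          (nhdsWithin_le_nhds (s := Set.Ioi (0:ℝ)))
        norm_num at h2
        exact h2
      exact (ENNReal.continuous_ofReal.tendsto θab).comp h1
    refine le_of_tendsto hlim ?_
    filter_upwards [Ioo_mem_nhdsGT_of_mem (by norm_num : (0:ℝ) ∈ Set.Ico 0 1)] with ε hε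
    exact key ε hε.1 hε.2
  · -- chord comparison
    intro h1a h1b
    rw [hra] at h1a
    rw [hrb] at h1b
    have hcs : ⟪a - p, b - p⟫ ≤ ‖a - p‖ * ‖b - p‖ := real_inner_le_norm _ _
    have hone : (1:ℝ) ≤ ‖a - p‖ * ‖b - p‖ := by nlinarith
    have hz : (‖a - p‖ * ‖b - p‖) * (‖a - p‖⁻¹ * ‖b - p‖⁻¹) = 1 := by
      field_simp
    have hz0 : (0:ℝ) ≤ ‖a - p‖⁻¹ * ‖b - p‖⁻¹ := by positivity
    have hz1 : ‖a - p‖⁻¹ * ‖b - p‖⁻¹ ≤ 1 := by nlinarith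
    have hsq : ‖(‖a - p‖⁻¹ • (a - p)) - (‖b - p‖⁻¹ • (b - p))‖ ^ 2 ≤ ‖a - b‖ ^ 2 := by
      have hL : ‖(‖a - p‖⁻¹ • (a - p)) - (‖b - p‖⁻¹ • (b - p))‖ ^ 2
          = 2 - 2 * ((‖a - p‖⁻¹ * ‖b - p‖⁻¹) * ⟪a - p, b - p⟫) := by
        rw [norm_sub_sq_real, hunita, hunitb, real_inner_smul_left, real_inner_smul_right]
        ring
      have hR : ‖a - b‖ ^ 2 = ‖a - p‖ ^ 2 - 2 * ⟪a - p, b - p⟫ + ‖b - p‖ ^ 2 := by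
        rw [show a - b = (a - p) - (b - p) by abel, norm_sub_sq_real]
      rw [hL, hR]
      nlinarith [sq_nonneg (‖a - p‖ - ‖b - p‖),
        mul_le_mul_of_nonneg_right hcs (sub_nonneg.2 hz1)]
    rw [hchord, dist_eq_norm]
    have h := Real.sqrt_le_sqrt hsq
    rwa [Real.sqrt_sq (norm_nonneg _), Real.sqrt_sq (norm_nonneg _)] at h
end
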